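/- Let V be a finite-dimensional real normed vector space, let J : ℝ → L(V,V) be a differentiable family with J(t) ∘ J(t) = -id for all t, and set K(t) := J'(t). Let g : ℝ → (symmetric bilinear forms on V) be a differentiable family whose derivative decomposes as g'(t) = H(t) + F(t), where H(t) is a symmetric bilinear form that is J(t)-invariant and F(t) is a symmetric bilinear form that is J(t)-anti-invariant. Assume g(0) is compatible with J(0), i.e. g(0)(J(0)u, J(0)v) = g(0)(u,v) for all u,v. Then g(t) is compatible with J(t) for all t if and only if for all t and all u, v ∈ V one has F(t)(u,v) = (1/2)·( g(t)(K(t)u, J(t)v) + g(t)(J(t)u, K(t)v) ). -/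

import Mathlib

/-- Lemma 4.2, first part: compatibility of a varying metric with a
varying almost complex structure is preserved iff the anti-invariant part of the
variation of the metric is determined by the variation of `J`. -/
theorem statement1 {V : Type*} [NormedAddCommGroup V] [NormedSpace ℝ V]
    [FiniteDimensional ℝ V]
    (J : ℝ → V →L[ℝ] V) (hJdiff : Differentiable ℝ J)
    (hJsq : ∀ t : ℝ, (J t).comp (J t) = -(ContinuousLinearMap.id ℝ V))
    (g H F : ℝ → V →L[ℝ] V →L[ℝ] ℝ)
    (hgdiff : Differentiable ℝ g)
    (hgsym : ∀ (t : ℝ) (u v : V), g t u v = g t v u)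
    (hHsym : ∀ (t : ℝ) (u v : V), H t u v = H t v u)
    (hFsym : ∀ (t : ℝ) (u v : V), F t u v = F t v u)
    (hHinv : ∀ (t : ℝ) (u v : V), H t (J t u) (J t v) = H t u v)
    (hFanti : ∀ (t : ℝ) (u v : V), F t (J t u) (J t v) = -(F t u v))
    (hderiv : ∀ t : ℝ, deriv g t = H t + F t)
    (hcompat0 : ∀ u v : V, g 0 (J 0 u) (J 0 v) = g 0 u v) :
    (∀ (t : ℝ) (u v : V), g t (J t u) (J t v) = g t u v) ↔
      (∀ (t : ℝ) (u v : V), F t u v =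
        (1/2) * (g t (deriv J t u) (J t v) + g t (J t u) (deriv J t v))) := by
  have key : ∀ (t : ℝ) (u v : V),
      HasDerivAt (fun s => g s (J s u) (J s v) - g s u v)
        (-(2 * F t u v) + (g t (deriv J t u) (J t v) + g t (J t u) (deriv J t v))) t := by
    intro t u v
    have hJ := (hJdiff t).hasDerivAt
    have hg := DifferentiableAt.hasDerivAt (𝕜 := ℝ) (F := V →L[ℝ] V →L[ℝ] ℝ) (f := g) (x := t) (hgdiff t)
    have ha : HasDerivAt (fun s => J s u) (deriv J t u) t := by
      simpa using hJ.clm_apply (hasDerivAt_const t u)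
    have hb : HasDerivAt (fun s => J s v) (deriv J t v) t := by
      simpa using hJ.clm_apply (hasDerivAt_const t v)
    have hc : HasDerivAt (fun s => g s (J s u)) (deriv g t (J t u) + g t (deriv J t u)) t := by
      simpa using hg.clm_apply ha
    have hf : HasDerivAt (fun s => g s (J s u) (J s v))
        ((deriv g t (J t u) + g t (deriv J t u)) (J t v) + g t (J t u) (deriv J t v)) t :=
      hc.clm_apply hb
    have hg2 : HasDerivAt (fun s => g s u v) (deriv g t u v) t := by
      simpa using (hg.clm_apply (hasDerivAt_const t u)).clm_apply (hasDerivAt_const t v)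
    have h := hf.sub hg2
    convert h using 1
    · rfl
    · rfl
    · rfl
    erw [hderiv t]
    simp only [hderiv, ContinuousLinearMap.add_apply, hHinv, hFanti]
    ring
  constructor
  · intro hcomp t u v
    have h0 : HasDerivAt (fun s => g s (J s u) (J s v) - g s u v) 0 t := by
      have heq : (fun s => g s (J s u) (J s v) - g s u v) = fun _ => (0 : ℝ) :=
        funext fun s => by rw [hcomp s u v]; ring
      rw [heq]; exact hasDerivAt_const t 0
    have := (key t u v).unique h0
    linarith
  · intro hF t u v
    have hzero : ∀ s, deriv (fun s => g s (J s u) (J s v) - g s u v) s = 0 := by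
      intro s
      rw [(key s u v).deriv, hF s u v]; ring
    have hdiff : Differentiable ℝ (fun s => g s (J s u) (J s v) - g s u v) :=
      fun s => (key s u v).differentiableAt
    have hconst := is_const_of_deriv_eq_zero hdiff hzero t 0
    have h0 : g 0 (J 0 u) (J 0 v) - g 0 u v = 0 := by rw [hcompat0]; ring
    have : g t (J t u) (J t v) - g t u v = 0 := by rw [hconst, h0]
    linarith
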